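/- Let ξ̄ ∈ (ℝ_{>0})^𝐱 be an equilibrium of the competitive Lotka-Volterra system on a finite set 𝐱, i.e., r(x) = ∑_{y∈𝐱} α(x,y)·ξ̄(y) for all x ∈ 𝐱. Suppose θ_x > 0 satisfy the symmetry condition θ_x α(x,y) = θ_y α(y,x). Then for any solution ξ_t of dξ_t(x)/dt = [r(x) − ∑_{y∈𝐱} α(x,y)ξ_t(y)]·ξ_t(x) with ξ_t(x) ≥ 0, the Lyapunov functional L(ξ) = (1/2)∑_{x,y} θ_x α(x,y) ξ(x)ξ(y) − ∑_x θ_x r(x) ξ(x) satisfies dL(ξ_t)/dt = −∑_{x∈𝐱} θ_x·[r(x) − ∑_y α(x,y)ξ_t(y)]²·ξ_t(x) ≤ 0. -/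

import Mathlib

/-- The Lyapunov functional of a symmetric competitive Lotka-Volterra system
decreases along nonnegative solutions. -/
theorem stmt_2 {ι : Type*} [Fintype ι] (r : ι → ℝ) (α : ι → ι → ℝ)
    (θ ξbar : ι → ℝ) (ξ : ℝ → ι → ℝ) (t : ℝ)
    (hθ : ∀ x, 0 < θ x)
    (hξbar : ∀ x, 0 < ξbar x)
    (heq : ∀ x, r x = ∑ y, α x y * ξbar y)
    (hsym : ∀ x y, θ x * α x y = θ y * α y x)
    (hpos : ∀ s x, 0 ≤ ξ s x)
    (hderiv : ∀ x, HasDerivAt (fun s => ξ s x)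
      ((r x - ∑ y, α x y * ξ t y) * ξ t x) t) :
    HasDerivAt
      (fun s => (1 / 2) * ∑ x, ∑ y, θ x * α x y * ξ s x * ξ s y
        - ∑ x, θ x * r x * ξ s x)
      (-∑ x, θ x * (r x - ∑ y, α x y * ξ t y) ^ 2 * ξ t x) t ∧
    (-∑ x, θ x * (r x - ∑ y, α x y * ξ t y) ^ 2 * ξ t x) ≤ 0 := by
  set D : ι → ℝ := fun x => (r x - ∑ y, α x y * ξ t y) * ξ t x with hD
  constructor
  · have h1 : HasDerivAt
        (fun s => (1 / 2) * ∑ x, ∑ y, θ x * α x y * ξ s x * ξ s y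
          - ∑ x, θ x * r x * ξ s x)
        ((1 / 2) * ∑ x, ∑ y, (θ x * α x y * D x * ξ t y
            + θ x * α x y * ξ t x * D y)
          - ∑ x, θ x * r x * D x) t := by
      apply HasDerivAt.sub
      · apply HasDerivAt.const_mul
        apply HasDerivAt.fun_sum
        intro x _
        apply HasDerivAt.fun_sum
        intro y _
        exact (((hderiv x).const_mul (θ x * α x y)).mul (hderiv y))
      · apply HasDerivAt.fun_sum
        intro x _
        exact (hderiv x).const_mul (θ x * r x)
    convert h1 using 1
    have key : ∑ x, ∑ y, θ x * α x y * ξ t x * D y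
        = ∑ x, ∑ y, θ x * α x y * D x * ξ t y := by
      rw [Finset.sum_comm]
      apply Finset.sum_congr rfl
      intro x _
      apply Finset.sum_congr rfl
      intro y _
      rw [hsym y x]; ring
    have hsplit : ∑ x, ∑ y, (θ x * α x y * D x * ξ t y
        + θ x * α x y * ξ t x * D y)
        = 2 * ∑ x, ∑ y, θ x * α x y * D x * ξ t y := by
      simp only [Finset.sum_add_distrib]
      rw [key]; ring
    have final : ∑ x, ∑ y, θ x * α x y * D x * ξ t y - ∑ x, θ x * r x * D x
        = -∑ x, θ x * (r x - ∑ y, α x y * ξ t y) ^ 2 * ξ t x := by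
      rw [← Finset.sum_sub_distrib, ← Finset.sum_neg_distrib]
      apply Finset.sum_congr rfl
      intro x _
      rw [show ∑ y, θ x * α x y * D x * ξ t y
          = θ x * D x * ∑ y, α x y * ξ t y from by
        rw [Finset.mul_sum]
        exact Finset.sum_congr rfl fun y _ => by ring]
      simp only [hD]
      ring
    rw [hsplit, ← final]
    ring
  · rw [neg_nonpos]
    apply Finset.sum_nonneg
    intro x _
    have h1 := (hθ x).le
    have h2 := hpos t x
    positivity
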